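/- Let S be a nonempty locally distributive meet-semilattice of locally finite height, and let A be a set of join-irreducible elements of S. If A is bounded above in S, then A is finite; moreover, if A ⊆ S^{≤u}, then the cardinality of A is at most the height of u. -/

import Mathlib

/-- An element of a meet-semilattice with minimum `⊥` is join-irreducible if it is not `⊥`
and it is not the join (least upper bound) of two strictly smaller elements. -/
def JoinIrred {α : Type*} [SemilatticeInf α] [OrderBot α] (x : α) : Prop :=
  x ≠ ⊥ ∧ ∀ y z : α, y < x → z < x → ¬ IsLUB {y, z} x

/-- In a meet-semilattice of locally finite height, any pair bounded above has a LUB. -/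
lemma stmt5_exists_lub {α : Type*} [SemilatticeInf α]
    (hfin : ∀ x : α, Order.height x ≠ ⊤)
    {u y z : α} (hy : y ≤ u) (hz : z ≤ u) : ∃ j, IsLUB {y, z} j := by
  set T : Set α := {w | y ≤ w ∧ z ≤ w ∧ w ≤ u} with hT
  have hTne : T.Nonempty := ⟨u, hy, hz, le_rfl⟩
  obtain ⟨m, ⟨w, hw, hwm⟩, hmin⟩ :=
    (wellFounded_lt (α := ℕ)).has_min ((fun w => (Order.height w).toNat) '' T)
      (hTne.image _)
  have hleast : ∀ w' ∈ T, w ≤ w' := by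
    intro w' hw'
    have hmem : w ⊓ w' ∈ T := ⟨le_inf hw.1 hw'.1, le_inf hw.2.1 hw'.2.1,
      inf_le_left.trans hw.2.2⟩
    rcases eq_or_lt_of_le (inf_le_left : w ⊓ w' ≤ w) with heq | hlt
    · exact inf_eq_left.mp heq
    · exfalso
      have h1 : Order.height (w ⊓ w') < Order.height w :=
        Order.height_strictMono hlt (lt_top_iff_ne_top.mpr (hfin _))
      rw [← ENat.coe_toNat (hfin w), ← ENat.coe_toNat (hfin (w ⊓ w'))] at h1
      exact hmin _ ⟨w ⊓ w', hmem, rfl⟩ (hwm ▸ (by exact_mod_cast h1))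
  refine ⟨w, ⟨?_, ?_⟩⟩
  · rintro b (rfl | rfl)
    · exact hw.1
    · exact hw.2.1
  · intro b hb
    have hyb : y ≤ b := hb (by simp)
    have hzb : z ≤ b := hb (by simp)
    have : w ≤ b ⊓ u := hleast _ ⟨le_inf hyb hy, le_inf hzb hz, inf_le_right⟩
    exact this.trans inf_le_left

lemma stmt5_main {α : Type*} [SemilatticeInf α] [OrderBot α]
    (hfin : ∀ x : α, Order.height x ≠ ⊤)
    (hdist : ∀ a b c j : α, IsLUB {b, c} j → IsLUB {a ⊓ b, a ⊓ c} (a ⊓ j)) :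
    ∀ n : ℕ, ∀ u : α, Order.height u ≤ n → ∀ A : Set α,
      (∀ a ∈ A, JoinIrred a) → A ⊆ Set.Iic u → A.Finite ∧ A.ncard ≤ n := by
  intro n
  induction n with
  | zero =>
    intro u hu A hirr hA
    have humin : IsMin u := Order.height_eq_zero.mp (le_antisymm hu zero_le)
    have hubot : u = ⊥ := le_antisymm (humin bot_le) bot_le
    have hempty : A = ∅ := by
      ext a
      simp only [Set.mem_empty_iff_false, iff_false]
      intro ha
      exact (hirr a ha).1 (le_antisymm (hubot ▸ hA ha) bot_le)
    simp [hempty]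
  | succ n ih =>
    intro u hu A hirr hA
    by_cases hubot : u = ⊥
    · have hempty : A = ∅ := by
        ext a
        simp only [Set.mem_empty_iff_false, iff_false]
        intro ha
        exact (hirr a ha).1 (le_antisymm (hubot ▸ hA ha) bot_le)
      simp [hempty]
    -- pick x in Iio u of maximal height
    have hne : ((fun w => (Order.height w).toNat) '' Set.Iio u).Nonempty :=
      ⟨_, ⟨⊥, bot_lt_iff_ne_bot.mpr hubot, rfl⟩⟩
    have hbd : BddAbove ((fun w => (Order.height w).toNat) '' Set.Iio u) := by
      refine ⟨n + 1, ?_⟩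
      rintro - ⟨w, hw, rfl⟩
      have : Order.height w ≤ (n + 1 : ℕ) := (Order.height_mono hw.le).trans (by exact_mod_cast hu)
      exact ENat.toNat_le_of_le_coe this
    obtain ⟨x, hxu, hxmax⟩ : ∃ x ∈ Set.Iio u, ∀ w ∈ Set.Iio u,
        (Order.height w).toNat ≤ (Order.height x).toNat := by
      obtain ⟨x, hx, hxval⟩ := Nat.sSup_mem hne hbd
      exact ⟨x, hx, fun w hw => (le_csSup hbd ⟨w, hw, rfl⟩).trans hxval.ge⟩
    -- x is maximal in Iio u
    have hxmax' : ∀ w, x < w → w < u → False := by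
      intro w hxw hwu
      have h1 : Order.height x < Order.height w :=
        Order.height_strictMono hxw (lt_top_iff_ne_top.mpr (hfin _))
      rw [← ENat.coe_toNat (hfin w), ← ENat.coe_toNat (hfin x)] at h1
      exact absurd (hxmax w hwu) (by exact_mod_cast not_le.mpr h1)
    -- at most one element of A is not below x
    have huniq : ∀ p ∈ A, ∀ q ∈ A, ¬ p ≤ x → ¬ q ≤ x → p = q := by
      have key : ∀ p ∈ A, ∀ q ∈ A, ¬ p ≤ x → ¬ q ≤ x → q ≤ p := by
        intro p hp q hq hpx hqx
        obtain ⟨j, hj⟩ := stmt5_exists_lub hfin (le_of_lt hxu) (hA hp)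
        have hju : j ≤ u := hj.2 (by
          rintro b (rfl | rfl)
          · exact le_of_lt hxu
          · exact hA hp)
        have hxj : x ≤ j := hj.1 (by simp)
        have hpj : p ≤ j := hj.1 (by simp)
        have hjeq : j = u := by
          rcases eq_or_lt_of_le hju with h | h
          · exact h
          · exact absurd h (fun h' => hxmax' j
              (lt_of_le_of_ne hxj (fun he => hpx (he ▸ hpj))) h')
        have hlub : IsLUB {q ⊓ x, q ⊓ p} q := by
          have := hdist q x p j hj
          rwa [hjeq, inf_eq_left.mpr (hA hq)] at this
        have hq1 : q ⊓ x < q := lt_of_le_of_ne inf_le_left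
          (fun he => hqx (inf_eq_left.mp he))
        by_contra hqp
        have hq2 : q ⊓ p < q := lt_of_le_of_ne inf_le_left
          (fun he => hqp (inf_eq_left.mp he))
        exact (hirr q hq).2 _ _ hq1 hq2 hlub
      intro p hp q hq hpx hqx
      exact le_antisymm (key q hq p hp hqx hpx) (key p hp q hq hpx hqx)
    -- split A
    have hsub : (A \ Set.Iic x).Subsingleton := by
      intro p hp q hq
      exact huniq p hp.1 q hq.1 hp.2 hq.2
    have hxle : Order.height x ≤ (n : ℕ∞) := by
      have h1 : Order.height x < Order.height u :=
        Order.height_strictMono hxu (lt_top_iff_ne_top.mpr (hfin _))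
      have h2 : Order.height x < ((n : ℕ∞) + 1) := h1.trans_le (by exact_mod_cast hu)
      rw [← ENat.coe_toNat (hfin x)] at h2 ⊢
      have : ((Order.height x).toNat : ℕ∞) < ((n + 1 : ℕ) : ℕ∞) := by exact_mod_cast h2
      exact_mod_cast Nat.lt_succ_iff.mp (by exact_mod_cast this)
    obtain ⟨hfin1, hcard1⟩ := ih x hxle (A ∩ Set.Iic x)
      (fun a ha => hirr a ha.1) (fun a ha => ha.2)
    have hfin2 : (A \ Set.Iic x).Finite := hsub.finite
    have hAeq : A = (A ∩ Set.Iic x) ∪ (A \ Set.Iic x) := by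
      ext a; by_cases h : a ≤ x <;> simp [h]
    constructor
    · rw [hAeq]; exact hfin1.union hfin2
    · calc A.ncard = ((A ∩ Set.Iic x) ∪ (A \ Set.Iic x)).ncard := by rw [← hAeq]
        _ ≤ (A ∩ Set.Iic x).ncard + (A \ Set.Iic x).ncard := Set.ncard_union_le _ _
        _ ≤ n + 1 := add_le_add hcard1 ((Set.ncard_le_one hfin2).mpr (fun a ha b hb => hsub ha hb))

theorem stmt5 {α : Type*} [SemilatticeInf α] [OrderBot α]
    (hfin : ∀ x : α, Order.height x ≠ ⊤)
    (hdist : ∀ a b c j : α, IsLUB {b, c} j → IsLUB {a ⊓ b, a ⊓ c} (a ⊓ j))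
    (A : Set α) (hirr : ∀ a ∈ A, JoinIrred a) (hbdd : BddAbove A) :
    A.Finite ∧ ∀ u : α, A ⊆ Set.Iic u → (A.ncard : ℕ∞) ≤ Order.height u := by
  obtain ⟨u0, hu0⟩ := hbdd
  have hA0 : A ⊆ Set.Iic u0 := fun a ha => hu0 ha
  constructor
  · exact (stmt5_main hfin hdist (Order.height u0).toNat u0
      (ENat.coe_toNat (hfin u0)).ge A hirr hA0).1
  · intro u hsub
    have := (stmt5_main hfin hdist (Order.height u).toNat u
      (ENat.coe_toNat (hfin u)).ge A hirr hsub).2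
    rw [← ENat.coe_toNat (hfin u)]
    exact_mod_cast this
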